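/- arXiv:2603.03076 — 2 statements merged into one kernel-verified Lean document; each statement's English description precedes it below -/
import Mathlib

section
/- Let p : ℕ → (0,1) be a sequence with n·p(n) → ∞ and p(n)·(ln n)² → 0 as n → ∞, and let k : ℕ → ℕ be a sequence with 1 ≤ k(n) < n for all large n and k(n)·p(n) − 2·ln(n·p(n)) − 2 → 0 as n → ∞. Then e·n·p(n)·φ(n, k(n)+1, p(n)) / φ(n, k(n), p(n)) → 1 as n → ∞; equivalently, e·n·p(n)·(n−k(n))·((k(n)+1)/k(n))^{k(n)−2}·p(n)·(1−p(n))^{k(n)−1} → 1. -/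
open Filter

/-- `phi n k p`, the expected number of `k`-vertex induced trees in `G_{n,p}`. -/
noncomputable def phi (n k : ℕ) (p : ℝ) : ℝ :=
  (n.choose k : ℝ) * (k : ℝ) ^ ((k : ℝ) - 2) * p ^ (k - 1) *
    (1 - p) ^ (k * (k - 1) / 2 - (k - 1))

lemma aux_tri (m : ℕ) : (m+2)*(m+1)/2 - (m+1) = ((m+1)*m/2 - m) + m := by
  have h1 : (m+2)*(m+1) = (m+1)*m + (m+1)*2 := by ring
  have h2 : (m+2)*(m+1)/2 = (m+1)*m/2 + (m+1) := by
    rw [h1, Nat.add_mul_div_right _ _ (by norm_num : 0 < 2)]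
  have h3 : m ≤ (m+1)*m/2 := by
    rcases Nat.eq_zero_or_pos m with rfl | hm
    · simp
    rw [Nat.le_div_iff_mul_le (by norm_num : 0 < 2)]
    have h4 : 2*m ≤ (m+1)*m := mul_le_mul_left (by omega : 2 ≤ m+1) m
    generalize (m+1)*m = B at h4 ⊢
    omega
  rw [h2]
  generalize (m+1)*m/2 = A at h3 ⊢
  omega

lemma aux_tri' (k : ℕ) (hk : 1 ≤ k) :
    (k+1)*k/2 - k = (k*(k-1)/2 - (k-1)) + (k-1) := by
  obtain ⟨m, rfl⟩ : ∃ m, k = m + 1 := ⟨k-1, by omega⟩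
  simpa using aux_tri m

lemma phi_pos (n k : ℕ) (p : ℝ) (hk : 1 ≤ k) (hkn : k ≤ n) (hp0 : 0 < p) (hp1 : p < 1) :
    0 < phi n k p := by
  have hc : 0 < (n.choose k : ℝ) := by exact_mod_cast Nat.choose_pos hkn
  have hk0 : (0:ℝ) < k := by exact_mod_cast hk
  have hq : (0:ℝ) < 1 - p := by linarith
  exact mul_pos (mul_pos (mul_pos hc (Real.rpow_pos_of_pos hk0 _)) (pow_pos hp0 _))
    (pow_pos hq _)

lemma phi_succ (n k : ℕ) (p : ℝ) (hk : 1 ≤ k) (hkn : k ≤ n) (hp0 : 0 < p) (hp1 : p < 1) :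
    phi n (k+1) p
      = phi n k p *
        (((n:ℝ) - k) * (((k:ℝ)+1)/(k:ℝ)) ^ ((k:ℝ)-2) * p * (1-p)^(k-1)) := by
  have hk0 : (0:ℝ) < k := by exact_mod_cast hk
  have hk1 : (0:ℝ) < (k:ℝ)+1 := by positivity
  have hq : (0:ℝ) < 1 - p := by linarith
  have hnat := Nat.choose_succ_right_eq n k
  have echoose : (n.choose (k+1) : ℝ) * ((k:ℝ)+1) = (n.choose k : ℝ) * ((n:ℝ) - k) := by
    have hcast : ((n.choose (k+1) * (k+1) : ℕ) : ℝ) = ((n.choose k * (n-k) : ℕ) : ℝ) := by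
      exact_mod_cast congrArg (Nat.cast (R := ℝ)) hnat
    push_cast [Nat.cast_sub hkn] at hcast
    exact hcast
  have hchoose : (n.choose (k+1) : ℝ) = (n.choose k : ℝ) * ((n:ℝ) - k) / ((k:ℝ)+1) :=
    (eq_div_iff hk1.ne').mpr echoose
  simp only [phi, Nat.add_sub_cancel]
  rw [aux_tri' k hk, pow_add]
  push_cast
  rw [hchoose]
  have e5 : ((k:ℝ)+1) ^ ((k:ℝ)+1-2) = ((k:ℝ)+1)^((k:ℝ)-2) * ((k:ℝ)+1) := by
    rw [show (k:ℝ)+1-2 = ((k:ℝ)-2)+1 by ring, Real.rpow_add hk1, Real.rpow_one]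
  rw [e5]
  have e6 : (((k:ℝ)+1)/(k:ℝ)) ^ ((k:ℝ)-2) = ((k:ℝ)+1)^((k:ℝ)-2) / (k:ℝ)^((k:ℝ)-2) :=
    Real.div_rpow hk1.le hk0.le _
  rw [e6]
  have e7 : p ^ k = p^(k-1) * p := by
    conv_lhs => rw [show k = (k-1)+1 by omega]
    rw [pow_succ]
  rw [e7]
  have hKne : (k:ℝ)^((k:ℝ)-2) ≠ 0 := (Real.rpow_pos_of_pos hk0 _).ne'
  field_simp

/-- The log of the product under study, written as a sum of five vanishing terms. -/
noncomputable def Lfun (p : ℕ → ℝ) (k : ℕ → ℕ) (n : ℕ) : ℝ :=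
  -((k n : ℝ) * p n - 2 * Real.log ((n:ℝ) * p n) - 2) + p n
    + (((k n : ℝ) - 2) * Real.log (1 + 1/(k n : ℝ)) - 1)
    + Real.log (1 - (k n : ℝ)/(n:ℝ))
    + ((k n : ℝ) - 1) * (Real.log (1 - p n) + p n)

theorem phi_ratio_asymptotics (p : ℕ → ℝ) (hp : ∀ n, p n ∈ Set.Ioo (0 : ℝ) 1)
    (h1 : Tendsto (fun n : ℕ => (n : ℝ) * p n) atTop atTop)
    (h2 : Tendsto (fun n : ℕ => p n * (Real.log n) ^ 2) atTop (nhds 0))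
    (k : ℕ → ℕ) (hk : ∀ᶠ n : ℕ in atTop, 1 ≤ k n ∧ k n < n)
    (hk2 : Tendsto (fun n : ℕ => (k n : ℝ) * p n - 2 * Real.log (n * p n) - 2)
      atTop (nhds 0)) :
    Tendsto (fun n : ℕ =>
        Real.exp 1 * n * p n * phi n (k n + 1) (p n) / phi n (k n) (p n))
      atTop (nhds 1) ∧
    Tendsto (fun n : ℕ =>
        Real.exp 1 * n * p n * ((n : ℝ) - k n) *
          (((k n : ℝ) + 1) / (k n : ℝ)) ^ ((k n : ℝ) - 2) * p n *
          (1 - p n) ^ (k n - 1))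
      atTop (nhds 1) := by
  have hp0 : ∀ n, 0 < p n := fun n => (hp n).1
  have hp1 : ∀ n, p n < 1 := fun n => (hp n).2
  have hlogn : ∀ᶠ n : ℕ in atTop, 1 ≤ Real.log n :=
    (Real.tendsto_log_atTop.comp tendsto_natCast_atTop_atTop).eventually_ge_atTop 1
  -- p → 0
  have hpto0 : Tendsto p atTop (nhds 0) := by
    apply squeeze_zero' (Eventually.of_forall fun n => (hp0 n).le) _ h2
    filter_upwards [hlogn] with n hn
    have hL2 : 1 ≤ Real.log n ^ 2 := by nlinarith
    calc p n = p n * 1 := (mul_one _).symm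
      _ ≤ p n * Real.log n ^ 2 := mul_le_mul_of_nonneg_left hL2 (hp0 n).le
  -- log(np) → ∞
  have hlognp : Tendsto (fun n : ℕ => Real.log ((n:ℝ) * p n)) atTop atTop :=
    Real.tendsto_log_atTop.comp h1
  -- k p → ∞
  have hkp : Tendsto (fun n : ℕ => (k n : ℝ) * p n) atTop atTop := by
    have hb : Tendsto (fun n : ℕ => 2 * Real.log ((n:ℝ) * p n) + 2) atTop atTop :=
      tendsto_atTop_add_const_right _ 2 (hlognp.const_mul_atTop two_pos)
    have := hk2.add_atTop hb
    exact this.congr fun n => by ring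
  -- (k : ℝ) → ∞
  have hkR : Tendsto (fun n : ℕ => (k n : ℝ)) atTop atTop := by
    refine tendsto_atTop_mono (fun n => ?_) hkp
    exact mul_le_of_le_one_right (Nat.cast_nonneg _) (hp1 n).le
  -- p log n → 0
  have hplog : Tendsto (fun n : ℕ => p n * Real.log n) atTop (nhds 0) := by
    apply squeeze_zero' ?_ ?_ h2
    · filter_upwards [hlogn] with n hn
      exact mul_nonneg (hp0 n).le (by linarith)
    · filter_upwards [hlogn] with n hn
      have hL2 : Real.log n ≤ Real.log n ^ 2 := by nlinarith
      exact mul_le_mul_of_nonneg_left hL2 (hp0 n).le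
  -- k p² → 0
  have hkpp : Tendsto (fun n : ℕ => (k n : ℝ) * p n * p n) atTop (nhds 0) := by
    have hA : Tendsto
        (fun n : ℕ => ((k n:ℝ)*p n - 2*Real.log ((n:ℝ)*p n) - 2) * p n) atTop (nhds 0) := by
      simpa using hk2.mul hpto0
    have hB : Tendsto (fun n : ℕ => (2*Real.log (n:ℝ) + 2) * p n) atTop (nhds 0) := by
      have h := (hplog.const_mul 2).add (hpto0.const_mul 2)
      norm_num at h
      exact h.congr fun n => by ring
    have hC : Tendsto (fun n : ℕ => (2*Real.log ((n:ℝ)*p n) + 2) * p n) atTop (nhds 0) := by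
      apply squeeze_zero' ?_ ?_ hB
      · filter_upwards [hlognp.eventually_ge_atTop 0] with n hn
        exact mul_nonneg (by linarith) (hp0 n).le
      · filter_upwards [eventually_ge_atTop 1] with n hn
        have hn0 : (0:ℝ) < n := by exact_mod_cast hn
        have hle : Real.log ((n:ℝ) * p n) ≤ Real.log (n:ℝ) := by
          apply Real.log_le_log (mul_pos hn0 (hp0 n))
          nlinarith [hp0 n, hp1 n]
        have := (hp0 n).le
        nlinarith
    have h := hA.add hC
    norm_num at h
    exact h.congr fun n => by ring
  -- k/n → 0
  have hkn0 : Tendsto (fun n : ℕ => (k n : ℝ) / n) atTop (nhds 0) := by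
    have hinv : Tendsto (fun n : ℕ => ((n:ℝ) * p n)⁻¹) atTop (nhds 0) :=
      h1.inv_tendsto_atTop
    have hA : Tendsto
        (fun n : ℕ => ((k n:ℝ)*p n - 2*Real.log ((n:ℝ)*p n) - 2) * ((n:ℝ)*p n)⁻¹)
        atTop (nhds 0) := by simpa using hk2.mul hinv
    have key : Tendsto (fun x : ℝ => (2*Real.log x + 2) * x⁻¹) atTop (nhds 0) := by
      have l1 : Tendsto (fun x : ℝ => Real.log x / x) atTop (nhds 0) := by
        simpa [Function.comp] using Real.isLittleO_log_id_atTop.tendsto_div_nhds_zero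
      have h := (l1.const_mul 2).add (tendsto_inv_atTop_zero.const_mul 2)
      norm_num at h
      exact h.congr fun x => by ring
    have hB : Tendsto (fun n : ℕ => (2*Real.log ((n:ℝ)*p n) + 2) * ((n:ℝ)*p n)⁻¹)
        atTop (nhds 0) := key.comp h1
    have h := hA.add hB
    norm_num at h
    apply h.congr' ?_
    filter_upwards [eventually_ge_atTop 1] with n hn
    have hn0 : ((n:ℝ)) ≠ 0 := by
      have : (0:ℝ) < n := by exact_mod_cast hn
      exact this.ne'
    have hpn : p n ≠ 0 := (hp0 n).ne'
    field_simp
    ring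
  -- term (c)
  have hc : Tendsto (fun n : ℕ => ((k n:ℝ) - 2) * Real.log (1 + 1/(k n : ℝ)) - 1)
      atTop (nhds 0) := by
    have key : Tendsto (fun x : ℝ => (x - 2) * Real.log (1 + 1/x)) atTop (nhds 1) := by
      have l1 := Real.tendsto_mul_log_one_add_div_atTop 1
      have l2 : Tendsto (fun x : ℝ => Real.log (1 + 1/x)) atTop (nhds 0) := by
        have hbase : Tendsto (fun x : ℝ => 1 + 1/x) atTop (nhds 1) := by
          have h := (tendsto_const_nhds :
            Tendsto (fun _ : ℝ => (1:ℝ)) atTop (nhds 1)).add tendsto_inv_atTop_zero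
          rw [add_zero] at h
          exact h.congr fun x => by rw [one_div]
        have := (Real.continuousAt_log one_ne_zero).tendsto.comp hbase
        simpa [Function.comp_def] using this
      have h := l1.sub (l2.const_mul 2)
      norm_num at h
      exact h.congr fun x => by ring
    have h := (key.comp hkR).sub_const 1
    rw [sub_self] at h
    exact h.congr fun n => by simp [Function.comp]
  -- term (d)
  have hd : Tendsto (fun n : ℕ => Real.log (1 - (k n:ℝ)/(n:ℝ))) atTop (nhds 0) := by
    have hbase : Tendsto (fun n : ℕ => 1 - (k n:ℝ)/(n:ℝ)) atTop (nhds 1) := by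
      have h := (tendsto_const_nhds :
        Tendsto (fun _ : ℕ => (1:ℝ)) atTop (nhds 1)).sub hkn0
      rw [sub_zero] at h
      exact h
    have := (Real.continuousAt_log one_ne_zero).tendsto.comp hbase
    simpa [Function.comp_def] using this
  -- term (e)
  have he : Tendsto (fun n : ℕ => ((k n:ℝ) - 1) * (Real.log (1 - p n) + p n))
      atTop (nhds 0) := by
    have hbound : Tendsto (fun n : ℕ => (k n:ℝ) * p n * p n / (1 - p n)) atTop (nhds 0) := by
      have hq : Tendsto (fun n : ℕ => 1 - p n) atTop (nhds 1) := by
        have h := (tendsto_const_nhds :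
          Tendsto (fun _ : ℕ => (1:ℝ)) atTop (nhds 1)).sub hpto0
        rw [sub_zero] at h
        exact h
      have := hkpp.div hq one_ne_zero
      rw [div_one] at this
      exact this
    apply squeeze_zero_norm' ?_ hbound
    filter_upwards [hk] with n hn
    obtain ⟨h1k, _⟩ := hn
    have hp0n := hp0 n
    have hp1n := hp1 n
    have hqpos : 0 < 1 - p n := by linarith
    have hupper : Real.log (1 - p n) + p n ≤ 0 := by
      have := Real.log_le_sub_one_of_pos hqpos; linarith
    have hlow0 : 1 - (1 - p n)⁻¹ ≤ Real.log (1 - p n) :=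
      Real.one_sub_inv_le_log_of_pos hqpos
    have hinv : (1 - p n)⁻¹ = 1 + p n / (1 - p n) := by field_simp; ring
    have hlower : -(p n * p n / (1 - p n)) ≤ Real.log (1 - p n) + p n := by
      rw [hinv] at hlow0
      have hids : p n / (1 - p n) - p n = p n * p n / (1 - p n) := by
        field_simp; ring
      linarith
    have hk1R : (1:ℝ) ≤ (k n : ℝ) := by exact_mod_cast h1k
    rw [Real.norm_eq_abs, abs_mul]
    calc |(k n:ℝ) - 1| * |Real.log (1 - p n) + p n|
        ≤ (k n:ℝ) * (p n * p n / (1 - p n)) := by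
          apply mul_le_mul ?_ ?_ (abs_nonneg _) (by linarith)
          · rw [abs_of_nonneg (by linarith)]; linarith
          · rw [abs_le]; constructor
            · linarith
            · linarith [hlower, hupper, (by positivity : 0 ≤ p n * p n / (1 - p n))]
      _ = (k n:ℝ) * p n * p n / (1 - p n) := by ring
  -- L → 0
  have hL0 : Tendsto (Lfun p k) atTop (nhds 0) := by
    have h := (((hk2.neg.add hpto0).add hc).add hd).add he
    norm_num at h
    exact h.congr fun n => by simp [Lfun]
  have hexp : Tendsto (fun n : ℕ => Real.exp (Lfun p k n)) atTop (nhds 1) := by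
    have := (Real.continuous_exp.tendsto 0).comp hL0
    simpa [Function.comp_def] using this
  -- eventual equality exp (L n) = second expression
  have heq2 : ∀ᶠ n : ℕ in atTop,
      Real.exp (Lfun p k n)
        = Real.exp 1 * n * p n * ((n : ℝ) - k n) *
            (((k n : ℝ) + 1) / (k n : ℝ)) ^ ((k n : ℝ) - 2) * p n *
            (1 - p n) ^ (k n - 1) := by
    filter_upwards [hk] with n hn
    obtain ⟨h1k, hknn⟩ := hn
    have hnnat : 0 < n := by omega
    have hn0 : (0:ℝ) < n := by exact_mod_cast hnnat
    have hkpos : (0:ℝ) < k n := by exact_mod_cast h1k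
    have hklt : (k n : ℝ) < n := by exact_mod_cast hknn
    have hnk : (0:ℝ) < (n:ℝ) - k n := by linarith
    have hp0n := hp0 n
    have hp1n := hp1 n
    have hq : (0:ℝ) < 1 - p n := by linarith
    have hr : (0:ℝ) < (((k n : ℝ) + 1) / (k n : ℝ)) ^ ((k n : ℝ) - 2) :=
      Real.rpow_pos_of_pos (div_pos (by linarith) hkpos) _
    have hEpos : 0 < Real.exp 1 * n * p n * ((n : ℝ) - k n) *
        (((k n : ℝ) + 1) / (k n : ℝ)) ^ ((k n : ℝ) - 2) * p n *
        (1 - p n) ^ (k n - 1) :=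
      mul_pos (mul_pos (mul_pos (mul_pos (mul_pos (mul_pos (Real.exp_pos 1) hn0) hp0n)
        hnk) hr) hp0n) (pow_pos hq _)
    rw [← Real.exp_log hEpos]
    congr 1
    have A1 : Real.exp 1 ≠ 0 := (Real.exp_pos 1).ne'
    have A2 : (n:ℝ) ≠ 0 := hn0.ne'
    have A3 : p n ≠ 0 := hp0n.ne'
    have A4 : (n:ℝ) - k n ≠ 0 := hnk.ne'
    have A5 : (((k n : ℝ) + 1) / (k n : ℝ)) ^ ((k n : ℝ) - 2) ≠ 0 := hr.ne'
    have A6 : (1 - p n) ^ (k n - 1) ≠ 0 := (pow_pos hq _).ne'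
    rw [Real.log_mul (mul_ne_zero (mul_ne_zero (mul_ne_zero (mul_ne_zero
        (mul_ne_zero A1 A2) A3) A4) A5) A3) A6,
      Real.log_mul (mul_ne_zero (mul_ne_zero (mul_ne_zero (mul_ne_zero A1 A2) A3) A4) A5) A3,
      Real.log_mul (mul_ne_zero (mul_ne_zero (mul_ne_zero A1 A2) A3) A4) A5,
      Real.log_mul (mul_ne_zero (mul_ne_zero A1 A2) A3) A4,
      Real.log_mul (mul_ne_zero A1 A2) A3,
      Real.log_mul A1 A2,
      Real.log_exp, Real.log_pow, Real.log_rpow (div_pos (by linarith) hkpos)]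
    simp only [Lfun]
    rw [Real.log_mul A2 A3]
    rw [show 1 - (k n:ℝ)/(n:ℝ) = ((n:ℝ) - k n)/(n:ℝ) by field_simp,
      Real.log_div A4 A2]
    rw [show 1 + 1/(k n:ℝ) = ((k n:ℝ) + 1)/(k n:ℝ) by field_simp]
    push_cast [Nat.cast_sub h1k]
    ring
  have hsecond : Tendsto (fun n : ℕ =>
      Real.exp 1 * n * p n * ((n : ℝ) - k n) *
        (((k n : ℝ) + 1) / (k n : ℝ)) ^ ((k n : ℝ) - 2) * p n *
        (1 - p n) ^ (k n - 1)) atTop (nhds 1) :=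
    hexp.congr' heq2
  refine ⟨?_, hsecond⟩
  apply hsecond.congr'
  filter_upwards [hk] with n hn
  obtain ⟨h1k, hknn⟩ := hn
  have hne := (phi_pos n (k n) (p n) h1k hknn.le (hp0 n) (hp1 n)).ne'
  rw [phi_succ n (k n) (p n) h1k hknn.le (hp0 n) (hp1 n), mul_div_assoc,
    mul_div_cancel_left₀ _ hne]
  ring
end

section
/- Let n ≥ k ≥ 2 be integers, p ∈ (0,1), and let A, B ⊆ {1,…,n} with |A| = |B| = k and ℓ := |A ∩ B| ∈ {1,…,k−1}. Let T_A be a tree with vertex set A and T_B a tree with vertex set B whose edge sets agree on pairs of vertices from A ∩ B, and suppose the induced forest T_A[A ∩ B] has exactly m connected components. Then in G_{n,p}, Pr[G[A] = T_A and G[B] = T_B] = (p/(1−p))^{2k−ℓ+m−2} · (1−p)^{2·k(k−1)/2 − ℓ(ℓ−1)/2}. -/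
open scoped Classical
open MeasureTheory Filter

/-- Bernoulli measure on `Bool` with success probability `p`. -/
noncomputable def bern (p : ℝ) : Measure Bool :=
  (ENNReal.ofReal p) • Measure.dirac true + (ENNReal.ofReal (1 - p)) • Measure.dirac false

/-- The binomial random graph measure `G_{n,p}`. -/
noncomputable def gnp (n : ℕ) (p : ℝ) : Measure (Sym2 (Fin n) → Bool) :=
  Measure.pi fun _ => bern p

/-- The simple graph determined by an outcome `ω`. -/
def graphOf {n : ℕ} (ω : Sym2 (Fin n) → Bool) : SimpleGraph (Fin n) where
  Adj u v := u ≠ v ∧ ω s(u, v) = true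
  symm := ⟨fun u v h => ⟨h.1.symm, by rw [Sym2.eq_swap]; exact h.2⟩⟩
  loopless := ⟨fun u h => h.1 rfl⟩

/-- `G[A] = T`: the induced subgraph of `G` on `A` has exactly the edges of `T`. -/
def inducedEq {n : ℕ} (G T : SimpleGraph (Fin n)) (A : Finset (Fin n)) : Prop :=
  ∀ u ∈ A, ∀ v ∈ A, (G.Adj u v ↔ T.Adj u v)

/-- Every vertex outside `A` has at least 3 neighbors in `A`. -/
def threeNbrs {n : ℕ} (G : SimpleGraph (Fin n)) (A : Finset (Fin n)) : Prop :=
  ∀ v ∉ A, 3 ≤ (A.filter fun u => G.Adj v u).card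

section Aux
variable {V : Type*}

lemma bern_true (p : ℝ) : bern p {true} = ENNReal.ofReal p := by
  simp [bern, Measure.dirac_apply]

lemma bern_false (p : ℝ) : bern p {false} = ENNReal.ofReal (1 - p) := by
  simp [bern, Measure.dirac_apply]

lemma bern_univ {p : ℝ} (h0 : 0 ≤ p) (h1 : p ≤ 1) : bern p Set.univ = 1 := by
  simp only [bern, Measure.coe_add, Measure.coe_smul, Pi.add_apply, Pi.smul_apply,
    measure_univ, smul_eq_mul, mul_one]
  rw [← ENNReal.ofReal_add h0 (by linarith)]
  simp

instance bern_finite (p : ℝ) : IsFiniteMeasure (bern p) := by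
  constructor
  simp only [bern, Measure.coe_add, Measure.coe_smul, Pi.add_apply, Pi.smul_apply, smul_eq_mul]
  exact ENNReal.add_lt_top.2 ⟨by simp [ENNReal.mul_lt_top, measure_lt_top],
    by simp [ENNReal.mul_lt_top, measure_lt_top]⟩

lemma bern_singleton (p : ℝ) (b : Bool) :
    bern p {b} = if b then ENNReal.ofReal p else ENNReal.ofReal (1 - p) := by
  cases b <;> simp [bern_true, bern_false]

lemma isAcyclic_of_embedding {W : Type*} {G : SimpleGraph V} {H : SimpleGraph W}
    (f : G ↪g H) (h : H.IsAcyclic) : G.IsAcyclic := by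
  intro v c hc
  exact h (c.map f.toHom) ((SimpleGraph.Walk.map_isCycle_iff_of_injective f.injective).2 hc)

/-- Embedding between induced subgraphs on nested sets. -/
def induceEmbOfSubset {G : SimpleGraph V} {s t : Set V} (h : s ⊆ t) :
    G.induce s ↪g G.induce t :=
  ⟨⟨Set.inclusion h, Set.inclusion_injective h⟩, Iff.rfl⟩

lemma image_edgeFinset_induce (G : SimpleGraph V) (s : Set V)
    [Fintype (G.induce s).edgeSet] [Fintype G.edgeSet]
    [DecidablePred fun e : Sym2 V => ∀ v ∈ e, v ∈ s] :
    (G.induce s).edgeFinset.image (Sym2.map Subtype.val)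
      = G.edgeFinset.filter (fun e => ∀ v ∈ e, v ∈ s) := by
  ext e
  induction e using Sym2.ind with
  | _ u v =>
    simp only [Finset.mem_image, Finset.mem_filter, SimpleGraph.mem_edgeFinset]
    constructor
    · rintro ⟨e', he', he⟩
      induction e' using Sym2.ind with
      | _ a b =>
        rw [Sym2.map_pair_eq] at he
        rw [← he]
        simp only [SimpleGraph.mem_edgeFinset, SimpleGraph.mem_edgeSet] at he'
        refine ⟨he', ?_⟩
        simp only [Sym2.mem_iff]
        rintro x (rfl | rfl) <;> simp
    · rintro ⟨hadj, hmem⟩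
      have hu : u ∈ s := hmem u (Sym2.mem_mk_left u v)
      have hv : v ∈ s := hmem v (Sym2.mem_mk_right u v)
      refine ⟨s(⟨u, hu⟩, ⟨v, hv⟩), ?_, by simp⟩
      simpa [SimpleGraph.mem_edgeFinset] using hadj

lemma card_edgeFinset_induce (G : SimpleGraph V) (s : Set V)
    [Fintype (G.induce s).edgeSet] [Fintype G.edgeSet]
    [DecidablePred fun e : Sym2 V => ∀ v ∈ e, v ∈ s] :
    (G.induce s).edgeFinset.card
      = (G.edgeFinset.filter (fun e => ∀ v ∈ e, v ∈ s)).card := by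
  rw [← image_edgeFinset_induce,
    Finset.card_image_of_injective _ (Sym2.map.injective Subtype.val_injective)]

lemma reachable_induce_of_support {G : SimpleGraph V} {s : Set V} {u v : V}
    (w : G.Walk u v) (hw : ∀ x ∈ w.support, x ∈ s) (hu : u ∈ s) (hv : v ∈ s) :
    (G.induce s).Reachable ⟨u, hu⟩ ⟨v, hv⟩ := by
  induction w with
  | nil => rfl
  | @cons a b c h p ih =>
    have hb : b ∈ s := hw b (by simp)
    have : (G.induce s).Adj ⟨a, hu⟩ ⟨b, hb⟩ := h
    exact this.reachable.trans (ih (fun x hx => hw x (by simp [hx])) hb hv)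

lemma induce_supp_connected [Fintype V] (G : SimpleGraph V) (c : G.ConnectedComponent) :
    (G.induce c.supp).Connected := by
  obtain ⟨v, rfl⟩ : ∃ v, G.connectedComponentMk v = c := c.exists_rep
  rw [SimpleGraph.connected_iff]
  constructor
  · rintro ⟨a, ha⟩ ⟨b, hb⟩
    rw [SimpleGraph.ConnectedComponent.mem_supp_iff] at ha hb
    have hr : G.Reachable a b := SimpleGraph.ConnectedComponent.exact (ha.trans hb.symm)
    obtain ⟨w⟩ := hr
    refine reachable_induce_of_support w (fun x hx => ?_) ha hb
    rw [SimpleGraph.ConnectedComponent.mem_supp_iff, ← ha]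
    exact SimpleGraph.ConnectedComponent.sound (w.takeUntil x hx).reachable.symm
  · exact ⟨⟨v, rfl⟩⟩

set_option maxHeartbeats 1000000 in
lemma forest_card [Fintype V] (G : SimpleGraph V) (hG : G.IsAcyclic) :
    G.edgeFinset.card + Nat.card G.ConnectedComponent = Fintype.card V := by
  classical
  letI : ∀ (c : G.ConnectedComponent) (v : V), Decidable (v ∈ c.supp) :=
    fun _ _ => Classical.propDecidable _
  set g : Sym2 V → G.ConnectedComponent := fun e => G.connectedComponentMk (Quot.out e).1 with hg
  have key : ∀ e ∈ G.edgeFinset, ∀ c : G.ConnectedComponent,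
      (g e = c ↔ ∀ v ∈ e, v ∈ c.supp) := by
    intro e he c
    induction e using Sym2.ind with
    | _ u v =>
      rw [SimpleGraph.mem_edgeFinset, SimpleGraph.mem_edgeSet] at he
      have hmk : G.connectedComponentMk u = G.connectedComponentMk v :=
        SimpleGraph.ConnectedComponent.sound he.reachable
      have hout : g s(u, v) = G.connectedComponentMk u := by
        have h1 : (Quot.out s(u, v)).1 ∈ s(u, v) := Sym2.out_fst_mem _
        rw [Sym2.mem_iff] at h1
        rcases h1 with h1 | h1 <;> rw [hg] <;> simp only <;> rw [h1]
        exact hmk.symm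
      rw [hout]
      simp only [SimpleGraph.ConnectedComponent.mem_supp_iff, Sym2.mem_iff]
      constructor
      · rintro rfl x hx
        rcases hx with rfl | rfl
        · rfl
        · exact hmk.symm
      · intro h
        exact h u (Or.inl rfl)
  have hE : G.edgeFinset.card
      = ∑ c : G.ConnectedComponent, (G.edgeFinset.filter fun e => g e = c).card :=
    Finset.card_eq_sum_card_fiberwise (fun x _ => Finset.mem_univ _)
  have hfilter : ∀ c : G.ConnectedComponent, (G.edgeFinset.filter fun e => g e = c)
      = G.edgeFinset.filter (fun e => ∀ v ∈ e, v ∈ c.supp) := by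
    intro c
    apply Finset.filter_congr
    intro e he
    exact key e he c
  have hTree : ∀ c : G.ConnectedComponent,
      (G.edgeFinset.filter (fun e => ∀ v ∈ e, v ∈ c.supp)).card + 1 = c.supp.toFinset.card := by
    intro c
    have ht : (G.induce c.supp).IsTree :=
      ⟨induce_supp_connected G c, isAcyclic_of_embedding (SimpleGraph.Embedding.induce _) hG⟩
    have h2 := ht.card_edgeFinset
    rw [card_edgeFinset_induce] at h2
    rw [Set.toFinset_card]
    exact h2
  have hV : Fintype.card V = ∑ c : G.ConnectedComponent, c.supp.toFinset.card := by
    have h3 := Finset.card_eq_sum_card_fiberwise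
      (f := fun v => G.connectedComponentMk v) (s := Finset.univ) (t := Finset.univ)
      (fun x _ => Finset.mem_univ _)
    rw [← Finset.card_univ, h3]
    refine Finset.sum_congr rfl fun c _ => ?_
    congr 1
    ext v
    simp [SimpleGraph.ConnectedComponent.mem_supp_iff]
  have hcard : Nat.card G.ConnectedComponent = ∑ _c : G.ConnectedComponent, 1 := by
    simp [Nat.card_eq_fintype_card]
  rw [hE, hcard, hV, ← Finset.sum_add_distrib]
  refine Finset.sum_congr rfl fun c _ => ?_
  rw [hfilter c]
  exact hTree c

lemma mem_offDiag_image [DecidableEq V] (s : Finset V) (u v : V) :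
    s(u, v) ∈ s.offDiag.image Sym2.mk.uncurry ↔ u ∈ s ∧ v ∈ s ∧ u ≠ v := by
  constructor
  · intro h
    obtain ⟨⟨a, b⟩, hab, he⟩ := Finset.mem_image.1 h
    rw [Finset.mem_offDiag] at hab
    rw [Function.uncurry_apply_pair, Sym2.eq_iff] at he
    rcases he with ⟨rfl, rfl⟩ | ⟨rfl, rfl⟩
    · exact ⟨hab.1, hab.2.1, hab.2.2⟩
    · exact ⟨hab.2.1, hab.1, hab.2.2.symm⟩
  · rintro ⟨hu, hv, huv⟩
    exact Finset.mem_image.2 ⟨(u, v), Finset.mem_offDiag.2 ⟨hu, hv, huv⟩, rfl⟩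

lemma edges_subset_of_tree_on {n : ℕ} (T : SimpleGraph (Fin n)) (A : Finset (Fin n))
    (hTe : ∀ u v, T.Adj u v → u ∈ A ∧ v ∈ A) :
    ∀ e ∈ T.edgeFinset, ∀ v ∈ e, v ∈ (A : Set (Fin n)) := by
  intro e he
  induction e using Sym2.ind with
  | _ u v =>
    rw [SimpleGraph.mem_edgeFinset, SimpleGraph.mem_edgeSet] at he
    intro x hx
    rw [Sym2.mem_iff] at hx
    rcases hx with rfl | rfl
    · exact (hTe _ _ he).1
    · exact (hTe _ _ he).2

lemma tree_on_finset_card {n : ℕ} (T : SimpleGraph (Fin n)) (A : Finset (Fin n))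
    (hTe : ∀ u v, T.Adj u v → u ∈ A ∧ v ∈ A)
    (hTt : (T.induce (A : Set (Fin n))).IsTree) :
    T.edgeFinset.card + 1 = A.card := by
  have h2 := hTt.card_edgeFinset
  rw [card_edgeFinset_induce] at h2
  rw [← Nat.card_eq_fintype_card, Nat.card_coe_set_eq, Set.ncard_coe_finset,
    Finset.filter_true_of_mem (edges_subset_of_tree_on T A hTe)] at h2
  exact h2

end Aux

theorem pair_probability_formula
    (n k ℓ m : ℕ) (hk : 2 ≤ k) (hkn : k ≤ n) (p : ℝ) (hp : p ∈ Set.Ioo (0 : ℝ) 1)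
    (A B : Finset (Fin n)) (hA : A.card = k) (hB : B.card = k)
    (hl : (A ∩ B).card = ℓ) (hl1 : 1 ≤ ℓ) (hl2 : ℓ ≤ k - 1)
    (TA TB : SimpleGraph (Fin n))
    (hTAe : ∀ u v, TA.Adj u v → u ∈ A ∧ v ∈ A)
    (hTAt : (TA.induce (A : Set (Fin n))).IsTree)
    (hTBe : ∀ u v, TB.Adj u v → u ∈ B ∧ v ∈ B)
    (hTBt : (TB.induce (B : Set (Fin n))).IsTree)
    (hagree : ∀ u ∈ A ∩ B, ∀ v ∈ A ∩ B, (TA.Adj u v ↔ TB.Adj u v))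
    (hm : Nat.card (TA.induce ((A ∩ B : Finset (Fin n)) : Set (Fin n))).ConnectedComponent = m) :
    gnp n p {ω | inducedEq (graphOf ω) TA A ∧ inducedEq (graphOf ω) TB B} =
      ENNReal.ofReal ((p / (1 - p)) ^ (2 * k - ℓ + m - 2) *
        (1 - p) ^ (k * (k - 1) - ℓ * (ℓ - 1) / 2)) := by
  classical
  obtain ⟨hp0, hp1⟩ := hp
  -- adjacency transfer between TA and TB
  have hAB : ∀ u v, u ∈ A → v ∈ A → TB.Adj u v → TA.Adj u v := by
    intro u v hu hv h
    exact (hagree u (Finset.mem_inter.2 ⟨hu, (hTBe u v h).1⟩)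
      v (Finset.mem_inter.2 ⟨hv, (hTBe u v h).2⟩)).2 h
  have hBA : ∀ u v, u ∈ B → v ∈ B → TA.Adj u v → TB.Adj u v := by
    intro u v hu hv h
    exact (hagree u (Finset.mem_inter.2 ⟨(hTAe u v h).1, hu⟩)
      v (Finset.mem_inter.2 ⟨(hTAe u v h).2, hv⟩)).1 h
  set SA : Finset (Sym2 (Fin n)) := A.offDiag.image Sym2.mk.uncurry with hSA
  set SB : Finset (Sym2 (Fin n)) := B.offDiag.image Sym2.mk.uncurry with hSB
  set S : Finset (Sym2 (Fin n)) := SA ∪ SB with hSdef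
  set f : Sym2 (Fin n) → Bool := fun e => decide (e ∈ TA.edgeSet ∨ e ∈ TB.edgeSet) with hf
  -- Step 1: the event is a cylinder
  have hev : {ω : Sym2 (Fin n) → Bool | inducedEq (graphOf ω) TA A ∧ inducedEq (graphOf ω) TB B}
      = Set.pi Set.univ (fun e => if e ∈ S then ({f e} : Set Bool) else Set.univ) := by
    ext ω
    simp only [Set.mem_setOf_eq, Set.mem_pi, Set.mem_univ, forall_true_left]
    constructor
    · rintro ⟨h1, h2⟩ e
      by_cases he : e ∈ S
      · rw [if_pos he]
        induction e using Sym2.ind with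
        | _ u v =>
          rw [hSdef, Finset.mem_union, hSA, hSB, mem_offDiag_image, mem_offDiag_image] at he
          rw [Set.mem_singleton_iff, Bool.eq_iff_iff, hf]
          simp only [decide_eq_true_eq, SimpleGraph.mem_edgeSet]
          rcases he with ⟨hu, hv, huv⟩ | ⟨hu, hv, huv⟩
          · have hiff := h1 u hu v hv
            constructor
            · intro hω
              exact Or.inl (hiff.1 ⟨huv, hω⟩)
            · rintro (hta | htb)
              · exact (hiff.2 hta).2
              · exact (hiff.2 (hAB u v hu hv htb)).2
          · have hiff := h2 u hu v hv
            constructor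
            · intro hω
              exact Or.inr (hiff.1 ⟨huv, hω⟩)
            · rintro (hta | htb)
              · exact (hiff.2 (hBA u v hu hv hta)).2
              · exact (hiff.2 htb).2
      · rw [if_neg he]
        trivial
    · intro hω
      constructor
      · intro u hu v hv
        by_cases huv : u = v
        · subst huv
          exact iff_of_false (fun h => h.1 rfl) (SimpleGraph.irrefl TA)
        · have heS : s(u, v) ∈ S := Finset.mem_union_left _
            (by rw [hSA, mem_offDiag_image]; exact ⟨hu, hv, huv⟩)
          have hωe := hω s(u, v)
          rw [if_pos heS, Set.mem_singleton_iff] at hωe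
          constructor
          · rintro ⟨-, hadj⟩
            rw [hωe, hf] at hadj
            simp only [decide_eq_true_eq, SimpleGraph.mem_edgeSet] at hadj
            rcases hadj with h | h
            · exact h
            · exact hAB u v hu hv h
          · intro h
            refine ⟨huv, ?_⟩
            rw [hωe, hf]
            simp only [decide_eq_true_eq, SimpleGraph.mem_edgeSet]
            exact Or.inl h
      · intro u hu v hv
        by_cases huv : u = v
        · subst huv
          exact iff_of_false (fun h => h.1 rfl) (SimpleGraph.irrefl TB)
        · have heS : s(u, v) ∈ S := Finset.mem_union_right _
            (by rw [hSB, mem_offDiag_image]; exact ⟨hu, hv, huv⟩)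
          have hωe := hω s(u, v)
          rw [if_pos heS, Set.mem_singleton_iff] at hωe
          constructor
          · rintro ⟨-, hadj⟩
            rw [hωe, hf] at hadj
            simp only [decide_eq_true_eq, SimpleGraph.mem_edgeSet] at hadj
            rcases hadj with h | h
            · exact hBA u v hu hv h
            · exact h
          · intro h
            refine ⟨huv, ?_⟩
            rw [hωe, hf]
            simp only [decide_eq_true_eq, SimpleGraph.mem_edgeSet]
            exact Or.inr h
  -- Step 2: measure of the cylinder
  set t : ℕ := (S.filter (fun e => f e = true)).card with ht
  have hmeas : gnp n p (Set.pi Set.univ (fun e => if e ∈ S then ({f e} : Set Bool) else Set.univ))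
      = (ENNReal.ofReal p) ^ t * (ENNReal.ofReal (1 - p)) ^ (S.card - t) := by
    rw [gnp, Measure.pi_pi]
    have hb : ∀ e : Sym2 (Fin n), bern p (if e ∈ S then ({f e} : Set Bool) else Set.univ)
        = if e ∈ S then (if f e = true then ENNReal.ofReal p else ENNReal.ofReal (1 - p))
          else 1 := by
      intro e
      split_ifs with h h2
      · rw [bern_singleton, if_pos h2]
      · rw [bern_singleton, if_neg h2]
      · exact bern_univ hp0.le hp1.le
    rw [Finset.prod_congr rfl (fun e _ => hb e), Finset.prod_ite_mem, Finset.univ_inter,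
      Finset.prod_ite, Finset.prod_const, Finset.prod_const]
    have hcards := Finset.card_filter_add_card_filter_not
      (s := S) (p := fun e => f e = true)
    have h2 : t + (S.filter (fun e => ¬ f e = true)).card = S.card := by
      rw [ht]
      exact hcards
    have h3 : (S.filter (fun e => ¬ f e = true)).card = S.card - t := by omega
    rw [← ht, h3]
  -- Step 3: counting
  have hfilterS : S.filter (fun e => f e = true) = TA.edgeFinset ∪ TB.edgeFinset := by
    ext e
    induction e using Sym2.ind with
    | _ u v =>
      simp only [Finset.mem_filter, Finset.mem_union, SimpleGraph.mem_edgeFinset, hf,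
        decide_eq_true_eq, SimpleGraph.mem_edgeSet]
      constructor
      · rintro ⟨-, h⟩
        exact h
      · intro h
        refine ⟨?_, h⟩
        rcases h with h | h
        · exact Finset.mem_union_left _
            (by rw [hSA, mem_offDiag_image]; exact ⟨(hTAe u v h).1, (hTAe u v h).2, h.ne⟩)
        · exact Finset.mem_union_right _
            (by rw [hSB, mem_offDiag_image]; exact ⟨(hTBe u v h).1, (hTBe u v h).2, h.ne⟩)
  have hcap : TA.edgeFinset ∩ TB.edgeFinset
      = TA.edgeFinset.filter
        (fun e => ∀ v ∈ e, v ∈ ((A ∩ B : Finset (Fin n)) : Set (Fin n))) := by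
    ext e
    induction e using Sym2.ind with
    | _ u v =>
      simp only [Finset.mem_inter, Finset.mem_filter, SimpleGraph.mem_edgeFinset,
        SimpleGraph.mem_edgeSet, Sym2.mem_iff, Finset.mem_coe]
      constructor
      · rintro ⟨ha, hb⟩
        refine ⟨ha, ?_⟩
        rintro x (rfl | rfl)
        · exact ⟨(hTAe _ _ ha).1, (hTBe _ _ hb).1⟩
        · exact ⟨(hTAe _ _ ha).2, (hTBe _ _ hb).2⟩
      · rintro ⟨ha, hx⟩
        have hu := hx u (Or.inl rfl)
        have hv := hx v (Or.inr rfl)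
        exact ⟨ha, hBA u v hu.2 hv.2 ha⟩
  have hforest := forest_card (TA.induce ((A ∩ B : Finset (Fin n)) : Set (Fin n)))
    (isAcyclic_of_embedding
      (induceEmbOfSubset (Finset.coe_subset.2 Finset.inter_subset_left)) hTAt.2)
  rw [card_edgeFinset_induce, hm, ← Nat.card_eq_fintype_card, Nat.card_coe_set_eq,
    Set.ncard_coe_finset, hl] at hforest
  have hinter : (TA.edgeFinset ∩ TB.edgeFinset).card + m = ℓ := by
    rw [hcap]
    exact hforest
  have hEA : TA.edgeFinset.card + 1 = k := by
    rw [← hA]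
    exact tree_on_finset_card TA A hTAe hTAt
  have hEB : TB.edgeFinset.card + 1 = k := by
    rw [← hB]
    exact tree_on_finset_card TB B hTBe hTBt
  have hun := Finset.card_union_add_card_inter TA.edgeFinset TB.edgeFinset
  have htval : t = 2 * k - ℓ + m - 2 := by
    rw [ht, hfilterS]
    omega
  have hNval : S.card = k * (k - 1) - ℓ * (ℓ - 1) / 2 := by
    have hSAB : SA ∩ SB = (A ∩ B).offDiag.image Sym2.mk.uncurry := by
      ext e
      induction e using Sym2.ind with
      | _ u v =>
        rw [Finset.mem_inter, hSA, hSB, mem_offDiag_image, mem_offDiag_image,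
          mem_offDiag_image]
        simp only [Finset.mem_inter]
        tauto
    have h1 := Finset.card_union_add_card_inter SA SB
    have hcSA : SA.card = k.choose 2 := by rw [hSA, Sym2.card_image_offDiag, hA]
    have hcSB : SB.card = k.choose 2 := by rw [hSB, Sym2.card_image_offDiag, hB]
    have hcAB : (SA ∩ SB).card = ℓ.choose 2 := by
      rw [hSAB, Sym2.card_image_offDiag, hl]
    rw [← hSdef, hcSA, hcSB, hcAB, Nat.choose_two_right, Nat.choose_two_right] at h1
    have he1 : k * (k - 1) / 2 * 2 = k * (k - 1) :=
      Nat.div_two_mul_two_of_even (Nat.even_mul_pred_self k)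
    have he2 : ℓ * (ℓ - 1) / 2 * 2 = ℓ * (ℓ - 1) :=
      Nat.div_two_mul_two_of_even (Nat.even_mul_pred_self ℓ)
    omega
  have htleN : t ≤ S.card := Finset.card_le_card (Finset.filter_subset _ _)
  -- Step 4: conclude
  rw [hev, hmeas, ← htval, ← hNval]
  have h1p : (0:ℝ) < 1 - p := by linarith
  have hreal : (p / (1 - p)) ^ t * (1 - p) ^ S.card = p ^ t * (1 - p) ^ (S.card - t) := by
    have hsplit : (1 - p) ^ S.card = (1 - p) ^ t * (1 - p) ^ (S.card - t) := by
      rw [← pow_add]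
      congr 1
      omega
    rw [hsplit, div_pow]
    field_simp
  rw [hreal, ENNReal.ofReal_mul (pow_nonneg hp0.le t), ENNReal.ofReal_pow hp0.le,
    ENNReal.ofReal_pow h1p.le]
end
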